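/- The Gaussian densities of the shrinking sphere-cylinders are strictly decreasing in the sphere dimension: for every integer $k \ge 1$, $$d_{k+1} < d_k,$$ where $d_k = (k/(2e))^{k/2} \cdot 2\sqrt{\pi}/\Gamma((k+1)/2)$. -/

import Mathlib

open Real Filter Finset Nat

private lemma log_series_upper {x : ℝ} (h0 : 0 < x) (h1 : x < 1) :
    Real.log (1+x) ≤ x - x^2/2 + x^3/3 - x^4/4 + x^5/5 + x^6/(1-x) := by
  have habs : |(-x)| < 1 := by rw [abs_neg, abs_of_pos h0]; exact h1
  have h := Real.abs_log_sub_add_sum_range_le habs 5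
  rw [abs_neg, abs_of_pos h0] at h
  simp only [Finset.sum_range_succ, Finset.sum_range_zero] at h
  rw [abs_le] at h
  have h2 := h.2
  norm_num at h2 ⊢
  nlinarith [h2]

private lemma elem_even {m : ℝ} (hm : 2 ≤ m) :
    (m+1/2) * Real.log (1+1/(2*m)) < 1/2 - 1/(24*m) + 2/(12*m+1) := by
  have hm0 : (0:ℝ) < m := by linarith
  set x : ℝ := 1/(2*m) with hxdef
  have hx0 : 0 < x := by positivity
  have hx4 : x ≤ 1/4 := by
    rw [hxdef, div_le_div_iff₀ (by linarith) (by norm_num)]; linarith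
  have hL : Real.log (1+x) ≤ x - x^2/2 + x^3/3 - x^4/4 + x^5/5 + (4/3)*x^6 := by
    refine (log_series_upper hx0 (by linarith)).trans ?_
    have : x^6/(1-x) ≤ (4/3)*x^6 := by
      rw [div_le_iff₀ (by linarith)]
      nlinarith [pow_pos hx0 6]
    linarith
  have e3 : m + 1/2 = (1+x)/(2*x) := by
    rw [hxdef]; field_simp
  have e1 : 1/(24*m) = x/12 := by rw [hxdef]; field_simp; ring
  have e2 : 2/(12*m+1) = 2*x/(6+x) := by
    rw [hxdef]
    rw [div_eq_div_iff (by positivity) (by positivity)]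
    field_simp
    ring
  rw [e1, e2, e3]
  have hlogpos : 0 < Real.log (1+x) := Real.log_pos (by linarith)
  have step1 : (1+x)/(2*x) * Real.log (1+x) ≤
      (1+x)/(2*x) * (x - x^2/2 + x^3/3 - x^4/4 + x^5/5 + (4/3)*x^6) :=
    mul_le_mul_of_nonneg_left hL (by positivity)
  refine step1.trans_lt ?_
  rw [div_mul_eq_mul_div, div_lt_iff₀ (by positivity : (0:ℝ) < 2*x)]
  have h6 : (0:ℝ) < 6 + x := by linarith
  rw [show (1/2 - x/12 + 2*x/(6+x)) * (2*x)
      = ((1/2 - x/12)*(2*x)*(6+x) + 4*x^2)/(6+x) by field_simp; ring]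
  rw [lt_div_iff₀ h6]
  nlinarith [pow_pos hx0 3, pow_pos hx0 4, pow_pos hx0 5, pow_pos hx0 6,
    pow_pos hx0 7, pow_pos hx0 8, sq_nonneg x, hx4, hx0]

private lemma elem_odd {m : ℝ} (hm : 1 ≤ m) :
    (m+1/2) * Real.log (1+1/(2*m+1)) < 1/2 - 2/(12*m+12) + 1/(24*m+25) := by
  have hm0 : (0:ℝ) < m := by linarith
  set x : ℝ := 1/(2*m+1) with hxdef
  have hx0 : 0 < x := by positivity
  have hx3 : x ≤ 1/3 := by
    rw [hxdef, div_le_div_iff₀ (by linarith) (by norm_num)]; linarith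
  have hL : Real.log (1+x) ≤ x - x^2/2 + x^3/3 - x^4/4 + x^5/5 + (3/2)*x^6 := by
    refine (log_series_upper hx0 (by linarith)).trans ?_
    have : x^6/(1-x) ≤ (3/2)*x^6 := by
      rw [div_le_iff₀ (by linarith)]
      nlinarith [pow_pos hx0 6]
    linarith
  have e3 : m + 1/2 = 1/(2*x) := by
    rw [hxdef]; field_simp
  have e1 : 2/(12*m+12) = x/(3*(1+x)) := by
    rw [hxdef]
    rw [div_eq_div_iff (by positivity) (by positivity)]
    field_simp
    ring
  have e2 : 1/(24*m+25) = x/(12+13*x) := by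
    rw [hxdef]
    rw [div_eq_div_iff (by positivity) (by positivity)]
    field_simp
    ring
  rw [e1, e2, e3]
  have step1 : 1/(2*x) * Real.log (1+x) ≤
      1/(2*x) * (x - x^2/2 + x^3/3 - x^4/4 + x^5/5 + (3/2)*x^6) :=
    mul_le_mul_of_nonneg_left hL (by positivity)
  refine step1.trans_lt ?_
  rw [div_mul_eq_mul_div, div_lt_iff₀ (by positivity : (0:ℝ) < 2*x)]
  have h1x : (0:ℝ) < 1 + x := by linarith
  have h13 : (0:ℝ) < 12 + 13*x := by linarith
  rw [show (1/2 - x/(3*(1+x)) + x/(12+13*x)) * (2*x)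
      = ((1+x)*(12+13*x)*x - (2/3)*x^2*(12+13*x) + 2*x^2*(1+x))/((1+x)*(12+13*x)) by
        field_simp]
  rw [lt_div_iff₀ (by positivity)]
  nlinarith [pow_pos hx0 3, pow_pos hx0 4, pow_pos hx0 5, pow_pos hx0 6,
    pow_pos hx0 7, pow_pos hx0 8, sq_nonneg x, hx3, hx0]

private lemma t_upper (n : ℕ) :
    Real.log (Stirling.stirlingSeq (n+1)) - Real.log (Stirling.stirlingSeq (n+2)) ≤
      1/(12*((n:ℝ)+1)) - 1/(12*((n:ℝ)+2)) := by
  have h_nonneg : (0:ℝ) ≤ ((1:ℝ) / (2 * ((n:ℝ)+1) + 1)) ^ 2 := sq_nonneg _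
  have hlt : ((1:ℝ) / (2 * ((n:ℝ)+1) + 1)) ^ 2 < 1 := by
    rw [one_div, inv_pow]
    apply inv_lt_one_of_one_lt₀
    nlinarith [Nat.cast_nonneg (α := ℝ) n]
  have g : HasSum (fun k : ℕ => (1/3 : ℝ) * (((1:ℝ) / (2 * ((n:ℝ)+1) + 1)) ^ 2) ^ (k+1))
      ((1/3) * ((((1:ℝ) / (2 * ((n:ℝ)+1) + 1)) ^ 2) / (1 - ((1:ℝ) / (2 * ((n:ℝ)+1) + 1)) ^ 2))) := by
    have := (hasSum_geometric_of_lt_one h_nonneg hlt).mul_left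
      ((((1:ℝ) / (2 * ((n:ℝ)+1) + 1)) ^ 2) * (1/3))
    have h2 : ∀ k : ℕ, (((1:ℝ) / (2 * ((n:ℝ)+1) + 1)) ^ 2) * (1/3) * (((1:ℝ) / (2 * ((n:ℝ)+1) + 1)) ^ 2) ^ k
        = (1/3 : ℝ) * (((1:ℝ) / (2 * ((n:ℝ)+1) + 1)) ^ 2) ^ (k+1) := by
      intro k; rw [pow_succ]; ring
    simp_rw [h2] at this
    convert this using 1
    case e'_6 => ring
    case e'_3 => rfl
  have hab : ∀ k : ℕ, (1 : ℝ) / (2 * ((k:ℕ)+1 : ℕ) + 1) * ((1 / (2 * ((n:ℕ)+1 : ℕ) + 1)) ^ 2) ^ ((k:ℕ)+1 : ℕ) ≤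
      (1/3 : ℝ) * (((1:ℝ) / (2 * ((n:ℝ)+1) + 1)) ^ 2) ^ (k+1) := by
    intro k
    push_cast
    apply mul_le_mul_of_nonneg_right
    · rw [div_le_div_iff₀ (by positivity) (by norm_num)]
      nlinarith [Nat.cast_nonneg (α := ℝ) k]
    · positivity
  have key := hasSum_le hab (Stirling.log_stirlingSeq_diff_hasSum n) g
  refine key.trans (le_of_eq ?_)
  have hz : (0:ℝ) < 2 * ((n:ℝ)+1) + 1 := by positivity
  have e1 : 1 - ((1:ℝ) / (2 * ((n:ℝ)+1) + 1)) ^ 2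
      = (4*((n:ℝ)+1)*((n:ℝ)+2))/(2 * ((n:ℝ)+1) + 1)^2 := by
    field_simp; ring
  rw [e1]
  have hne1 : ((n:ℝ)+1) ≠ 0 := by positivity
  have hne2 : ((n:ℝ)+2) ≠ 0 := by positivity
  field_simp
  ring

private lemma t_lower (n : ℕ) :
    1/(12*((n:ℝ)+1)+1) - 1/(12*((n:ℝ)+2)+1) ≤
      Real.log (Stirling.stirlingSeq (n+1)) - Real.log (Stirling.stirlingSeq (n+2)) := by
  have h := Stirling.log_stirlingSeq_diff_hasSum n
  have h2 := sum_le_hasSum (Finset.range 2) (fun k _ => by positivity) h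
  simp only [Finset.sum_range_succ, Finset.sum_range_zero, zero_add] at h2
  push_cast at h2
  norm_num at h2
  refine le_trans ?_ h2
  have hc : (0:ℝ) ≤ (n:ℝ) := Nat.cast_nonneg n
  set c : ℝ := (n:ℝ) with hcdef
  have hz : (0:ℝ) < 2*(c+1)+1 := by linarith
  have hd1 : (0:ℝ) < 12*(c+1)+1 := by linarith
  have hd2 : (0:ℝ) < 12*(c+2)+1 := by linarith
  rw [div_sub_div _ _ (ne_of_gt hd1) (ne_of_gt hd2), div_le_iff₀ (by positivity)]
  have e : (1/3 * ((2*(c+1)+1)^2)⁻¹ + 1/5 * (((2*(c+1)+1)^2)^2)⁻¹)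
      = (5*(2*(c+1)+1)^2 + 3)/(15*(2*(c+1)+1)^4) := by
    field_simp
    ring
  rw [e, div_mul_eq_mul_div, le_div_iff₀ (by positivity)]
  nlinarith [hc, mul_nonneg hc hc, mul_nonneg (mul_nonneg hc hc) hc,
    mul_nonneg (mul_nonneg (mul_nonneg hc hc) hc) hc]

private lemma tendsto_log_stirling (n : ℕ) :
    Tendsto (fun j : ℕ => Real.log (Stirling.stirlingSeq (n + 1 + j))) atTop
      (nhds (Real.log (Real.sqrt Real.pi))) := by
  have h1 : Tendsto (fun j : ℕ => n + 1 + j) atTop atTop := by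
    simpa [Nat.add_comm] using tendsto_add_atTop_nat (n+1)
  have h2 : Tendsto (fun j : ℕ => Stirling.stirlingSeq (n + 1 + j)) atTop
      (nhds (Real.sqrt Real.pi)) := Stirling.tendsto_stirlingSeq_sqrt_pi.comp h1
  have hne : Real.sqrt Real.pi ≠ 0 := by positivity
  exact ((Real.continuousAt_log hne).tendsto.comp h2)

private lemma tendsto_cast_aux (n : ℕ) :
    Tendsto (fun j : ℕ => ((n + 1 + j : ℕ) : ℝ)) atTop atTop := by
  have h1 : Tendsto (fun j : ℕ => n + 1 + j) atTop atTop := by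
    simpa [Nat.add_comm] using tendsto_add_atTop_nat (n+1)
  exact tendsto_natCast_atTop_atTop.comp h1

private lemma robbins_up (n : ℕ) :
    Real.log (Stirling.stirlingSeq (n+1)) ≤ Real.log (Real.sqrt Real.pi) + 1/(12*((n:ℝ)+1)) := by
  have tele : ∀ j : ℕ, Real.log (Stirling.stirlingSeq (n+1)) - 1/(12*((n:ℝ)+1)) ≤
      Real.log (Stirling.stirlingSeq (n+1+j)) - 1/(12*(((n+j:ℕ)):ℝ)+12) := by
    intro j
    induction j with
    | zero => push_cast; ring_nf; exact le_refl _
    | succ p ih =>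
      refine ih.trans ?_
      have hup := t_upper (n+p)
      have e1 : n+1+(p+1) = (n+p)+2 := by omega
      have e2 : n+1+p = (n+p)+1 := by omega
      rw [e1, e2] at *
      rw [Nat.add_right_comm n 1 p] at ih
      push_cast at ih hup ⊢
      ring_nf at ih hup ⊢
      linarith
  have hlim : Tendsto (fun j : ℕ =>
      Real.log (Stirling.stirlingSeq (n+1+j)) - 1/(12*(((n+j:ℕ)):ℝ)+12)) atTop
      (nhds (Real.log (Real.sqrt Real.pi) - 0)) := by
    apply Tendsto.sub (tendsto_log_stirling n)
    have h12 : Tendsto (fun j : ℕ => 12*(((n+j:ℕ)):ℝ)+12) atTop atTop := by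
      apply tendsto_atTop_add_const_right
      apply Tendsto.const_mul_atTop (by norm_num : (0:ℝ) < 12)
      have := tendsto_cast_aux n
      exact tendsto_natCast_atTop_atTop.comp (by simpa [Nat.add_comm] using tendsto_add_atTop_nat n)
    simpa [one_div, Pi.inv_def] using h12.inv_tendsto_atTop
  have := ge_of_tendsto' hlim tele
  rw [sub_zero] at this
  linarith

private lemma robbins_lo (n : ℕ) :
    Real.log (Real.sqrt Real.pi) + 1/(12*((n:ℝ)+1)+1) ≤ Real.log (Stirling.stirlingSeq (n+1)) := by
  have tele : ∀ j : ℕ, Real.log (Stirling.stirlingSeq (n+1+j)) - 1/(12*(((n+j:ℕ)):ℝ)+13) ≤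
      Real.log (Stirling.stirlingSeq (n+1)) - 1/(12*((n:ℝ)+1)+1) := by
    intro j
    induction j with
    | zero => push_cast; ring_nf; exact le_refl _
    | succ p ih =>
      refine le_trans ?_ ih
      have hlo := t_lower (n+p)
      have e1 : n+1+(p+1) = (n+p)+2 := by omega
      have e2 : n+1+p = (n+p)+1 := by omega
      rw [e1, e2] at *
      rw [Nat.add_right_comm n 1 p] at ih
      push_cast at ih hlo ⊢
      ring_nf at ih hlo ⊢
      linarith
  have hlim : Tendsto (fun j : ℕ =>
      Real.log (Stirling.stirlingSeq (n+1+j)) - 1/(12*(((n+j:ℕ)):ℝ)+13)) atTop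
      (nhds (Real.log (Real.sqrt Real.pi) - 0)) := by
    apply Tendsto.sub (tendsto_log_stirling n)
    have h12 : Tendsto (fun j : ℕ => 12*(((n+j:ℕ)):ℝ)+13) atTop atTop := by
      apply tendsto_atTop_add_const_right
      apply Tendsto.const_mul_atTop (by norm_num : (0:ℝ) < 12)
      exact tendsto_natCast_atTop_atTop.comp (by simpa [Nat.add_comm] using tendsto_add_atTop_nat n)
    simpa [one_div, Pi.inv_def] using h12.inv_tendsto_atTop
  have := le_of_tendsto' hlim tele
  rw [sub_zero] at this
  linarith

private lemma stirling_pos (n : ℕ) (hn : 1 ≤ n) : 0 < Stirling.stirlingSeq n := by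
  have h : Stirling.stirlingSeq n = (n ! : ℝ) / (Real.sqrt (2*n) * ((n:ℝ)/Real.exp 1)^n) := rfl
  rw [h]
  have hn0 : (0:ℝ) < (n:ℝ) := by exact_mod_cast hn
  have : (0:ℝ) < (n ! : ℝ) := by exact_mod_cast Nat.factorial_pos n
  positivity

private lemma log_factorial (n : ℕ) (hn : 1 ≤ n) :
    Real.log (n ! : ℝ) = Real.log (Stirling.stirlingSeq n)
      + 1/2 * Real.log (2*(n:ℝ)) + (n:ℝ) * Real.log (n:ℝ) - (n:ℝ) := by
  have hn0 : (0:ℝ) < (n:ℝ) := by exact_mod_cast hn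
  have hfact : (0:ℝ) < (n ! : ℝ) := by exact_mod_cast Nat.factorial_pos n
  have hden : (0:ℝ) < Real.sqrt (2*(n:ℝ)) * ((n:ℝ)/Real.exp 1)^n := by positivity
  have h : (n ! : ℝ) = Stirling.stirlingSeq n * (Real.sqrt (2*(n:ℝ)) * ((n:ℝ)/Real.exp 1)^n) := by
    have hs : Stirling.stirlingSeq n = (n ! : ℝ) / (Real.sqrt (2*(n:ℝ)) * ((n:ℝ)/Real.exp 1)^n) := rfl
    rw [hs, div_mul_cancel₀]
    exact ne_of_gt hden
  rw [h, Real.log_mul (ne_of_gt (stirling_pos n hn)) (ne_of_gt hden),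
    Real.log_mul (by positivity) (by positivity),
    Real.log_sqrt (by positivity), Real.log_pow, Real.log_div (ne_of_gt hn0) (Real.exp_ne_zero 1),
    Real.log_exp]
  push_cast
  ring

private lemma Gamma_half (m : ℕ) :
    Real.Gamma ((m:ℝ) + 1/2) = Real.sqrt Real.pi * ((2*m)! : ℝ) / (4^m * (m ! : ℝ)) := by
  induction m with
  | zero =>
    rw [show ((0:ℕ):ℝ) + 1/2 = 1/2 by norm_num, Real.Gamma_one_half_eq]
    norm_num
  | succ p ih =>
    have hne : ((p:ℝ) + 1/2) ≠ 0 := by positivity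
    have e : ((p+1:ℕ):ℝ) + 1/2 = ((p:ℝ) + 1/2) + 1 := by push_cast; ring
    rw [e, Real.Gamma_add_one hne, ih]
    have hf : ((2*(p+1))! : ℕ) = (2*p+2) * ((2*p+1) * (2*p)!) := by
      rw [show 2*(p+1) = (2*p+1)+1 by ring, Nat.factorial_succ, Nat.factorial_succ]
    have hf2 : ((p+1)! : ℕ) = (p+1) * p ! := Nat.factorial_succ p
    rw [hf, hf2]
    push_cast
    have h4 : (4:ℝ)^(p+1) = 4 * 4^p := by ring
    rw [h4]
    have hp : (0:ℝ) < (p ! : ℝ) := by exact_mod_cast Nat.factorial_pos p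
    field_simp
    ring

private lemma robbins_up' (n : ℕ) (hn : 1 ≤ n) :
    Real.log (Stirling.stirlingSeq n) ≤ Real.log (Real.sqrt Real.pi) + 1/(12*(n:ℝ)) := by
  obtain ⟨p, rfl⟩ : ∃ p, n = p + 1 := ⟨n - 1, by omega⟩
  have := robbins_up p
  push_cast
  push_cast at this
  linarith

private lemma robbins_lo' (n : ℕ) (hn : 1 ≤ n) :
    Real.log (Real.sqrt Real.pi) + 1/(12*(n:ℝ)+1) ≤ Real.log (Stirling.stirlingSeq n) := by
  obtain ⟨p, rfl⟩ : ∃ p, n = p + 1 := ⟨n - 1, by omega⟩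
  have := robbins_lo p
  push_cast
  push_cast at this
  linarith

private lemma even_linear (mR A B P K L1 L2 u v : ℝ)
    (helem : (mR+1/2)*(K-(B+A)) < 1/2 - u + 2*v)
    (hU : L2 ≤ P + u) (hL : P + v ≤ L1) :
    (2*mR+1)/2*(K-B-1) + (B+P) - (L1 + 1/2*(B+A) + mR*A - mR) <
      2*mR/2*(A-1) + (B+P) - (P + (L2 + 1/2*(B+(B+A)) + 2*mR*(B+A) - 2*mR)
        - mR*(2*B) - (L1 + 1/2*(B+A) + mR*A - mR)) := by
  nlinarith [helem, hU, hL]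

private lemma d_pos (d : ℕ → ℝ)
    (hd : ∀ k : ℕ, d k = ((k : ℝ) / (2 * Real.exp 1)) ^ ((k : ℝ) / 2) *
      (2 * Real.sqrt Real.pi / Real.Gamma (((k : ℝ) + 1) / 2)))
    (j : ℕ) (hj : 1 ≤ j) : 0 < d j := by
  rw [hd j]
  have hj0 : (0:ℝ) < (j:ℝ) := by exact_mod_cast hj
  have hb : (0:ℝ) < (j:ℝ)/(2*Real.exp 1) := by positivity
  have hG : 0 < Real.Gamma (((j:ℝ)+1)/2) := Real.Gamma_pos_of_pos (by positivity)
  have hrp := Real.rpow_pos_of_pos hb ((j:ℝ)/2)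
  have hpi := Real.sqrt_pos.mpr Real.pi_pos
  positivity

private lemma log_d (d : ℕ → ℝ)
    (hd : ∀ k : ℕ, d k = ((k : ℝ) / (2 * Real.exp 1)) ^ ((k : ℝ) / 2) *
      (2 * Real.sqrt Real.pi / Real.Gamma (((k : ℝ) + 1) / 2)))
    (j : ℕ) (hj : 1 ≤ j) :
    Real.log (d j) = ((j:ℝ)/2) * Real.log ((j:ℝ)/(2*Real.exp 1))
      + Real.log (2*Real.sqrt Real.pi) - Real.log (Real.Gamma (((j:ℝ)+1)/2)) := by
  have hj0 : (0:ℝ) < (j:ℝ) := by exact_mod_cast hj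
  have hb : (0:ℝ) < (j:ℝ)/(2*Real.exp 1) := by positivity
  have hG : 0 < Real.Gamma (((j:ℝ)+1)/2) := Real.Gamma_pos_of_pos (by positivity)
  have hpi : (0:ℝ) < 2*Real.sqrt Real.pi := by
    have := Real.sqrt_pos.mpr Real.pi_pos; linarith
  rw [hd j, Real.log_mul (by positivity) (by positivity),
    Real.log_rpow hb, Real.log_div (ne_of_gt hpi) (ne_of_gt hG)]
  ring

private lemma main_even (d : ℕ → ℝ)
    (hd : ∀ k : ℕ, d k = ((k : ℝ) / (2 * Real.exp 1)) ^ ((k : ℝ) / 2) *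
      (2 * Real.sqrt Real.pi / Real.Gamma (((k : ℝ) + 1) / 2)))
    (m : ℕ) (hm : 2 ≤ m) : d (2*m+1) < d (2*m) := by
  have hm1 : 1 ≤ m := by omega
  have hm0 : (0:ℝ) < (m:ℝ) := by exact_mod_cast hm1
  rw [← Real.exp_log (d_pos d hd (2*m+1) (by omega)), ← Real.exp_log (d_pos d hd (2*m) (by omega))]
  apply Real.exp_lt_exp.mpr
  rw [log_d d hd (2*m+1) (by omega), log_d d hd (2*m) (by omega)]
  have eG1 : (((2*m+1:ℕ):ℝ)+1)/2 = ((m:ℕ):ℝ) + 1 := by push_cast; ring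
  have eG2 : (((2*m:ℕ):ℝ)+1)/2 = ((m:ℕ):ℝ) + 1/2 := by push_cast; ring
  rw [eG1, eG2, Real.Gamma_nat_eq_factorial, Gamma_half]
  -- abbreviations
  set A := Real.log ((m:ℝ)) with hA
  set B := Real.log 2 with hB
  set P := Real.log (Real.sqrt Real.pi) with hP
  set K := Real.log (2*(m:ℝ)+1) with hK
  set L1 := Real.log (Stirling.stirlingSeq m) with hL1
  set L2 := Real.log (Stirling.stirlingSeq (2*m)) with hL2
  -- component identities
  have sqpi_pos : (0:ℝ) < Real.sqrt Real.pi := Real.sqrt_pos.mpr Real.pi_pos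
  have hfm_pos : (0:ℝ) < (m ! : ℝ) := by exact_mod_cast Nat.factorial_pos m
  have hf2m_pos : (0:ℝ) < ((2*m)! : ℝ) := by exact_mod_cast Nat.factorial_pos (2*m)
  have h1 : Real.log (((2*m+1:ℕ):ℝ)/(2*Real.exp 1)) = K - B - 1 := by
    push_cast
    rw [Real.log_div (by positivity) (by positivity),
      Real.log_mul (by norm_num) (Real.exp_ne_zero 1), Real.log_exp]
    ring
  have h2 : Real.log (((2*m:ℕ):ℝ)/(2*Real.exp 1)) = A - 1 := by
    push_cast
    rw [Real.log_div (by positivity) (by positivity),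
      Real.log_mul (by norm_num) (ne_of_gt hm0),
      Real.log_mul (by norm_num) (Real.exp_ne_zero 1), Real.log_exp]
    ring
  have h3 : Real.log (2*Real.sqrt Real.pi) = B + P := Real.log_mul (by norm_num) (ne_of_gt sqpi_pos)
  have h4 : Real.log ((4:ℝ)^m) = (m:ℝ)*(2*B) := by
    rw [show (4:ℝ) = 2^2 by norm_num, ← pow_mul, Real.log_pow]
    push_cast
    ring
  have h5 : Real.log (m ! : ℝ) = L1 + 1/2*(B + A) + (m:ℝ)*A - m := by
    rw [log_factorial m hm1, Real.log_mul (by norm_num) (ne_of_gt hm0)]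
  have h6 : Real.log (((2*m)! : ℝ)) = L2 + 1/2*(B + (B + A)) + (2*(m:ℝ))*(B + A) - 2*m := by
    have := log_factorial (2*m) (by omega)
    rw [this]
    push_cast
    rw [Real.log_mul (by norm_num) (by positivity : (2*(m:ℝ)) ≠ 0),
      Real.log_mul (by norm_num) (ne_of_gt hm0)]
  have h7 : Real.log (Real.sqrt Real.pi * ((2*m)! : ℝ)/(4^m * (m ! : ℝ)))
      = P + (L2 + 1/2*(B + (B + A)) + (2*(m:ℝ))*(B + A) - 2*m) - ((m:ℝ)*(2*B))
        - (L1 + 1/2*(B + A) + (m:ℝ)*A - m) := by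
    rw [Real.log_div (by positivity) (by positivity),
      Real.log_mul (ne_of_gt sqpi_pos) (ne_of_gt hf2m_pos),
      Real.log_mul (by positivity) (ne_of_gt hfm_pos), h4, h5, h6]
    ring
  -- elementary inequality
  have helem := elem_even (show (2:ℝ) ≤ (m:ℝ) by exact_mod_cast hm)
  have hKBA : Real.log (1+1/(2*(m:ℝ))) = K - (B + A) := by
    rw [show (1:ℝ)+1/(2*(m:ℝ)) = (2*(m:ℝ)+1)/(2*(m:ℝ)) by field_simp,
      Real.log_div (by positivity) (by positivity),
      Real.log_mul (by norm_num) (ne_of_gt hm0)]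
  rw [hKBA, show (2:ℝ)/(12*(m:ℝ)+1) = 2*(1/(12*(m:ℝ)+1)) by rw [mul_one_div]] at helem
  -- Robbins bounds
  have hrobU : L2 ≤ P + 1/(24*(m:ℝ)) := by
    have := robbins_up' (2*m) (by omega)
    push_cast at this
    rw [hL2, hP]
    convert this using 3
    ring
  have hrobL : P + 1/(12*(m:ℝ)+1) ≤ L1 := by
    have := robbins_lo' m hm1
    rw [hL1, hP]
    exact this
  rw [h1, h2, h3, h7, h5]
  push_cast
  linarith [even_linear (m:ℝ) A B P K L1 L2 (1/(24*(m:ℝ))) (1/(12*(m:ℝ)+1)) helem hrobU hrobL]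

private lemma odd_linear (mR A1 B P K L1 L2 u v : ℝ)
    (helem : (mR+1/2)*((B+A1)-K) < 1/2 - 2*u + v)
    (hU : L1 ≤ P + u) (hL : P + v ≤ L2) :
    (2*mR+2)/2*(A1-1) + (B+P) - (P + (L2 + 1/2*(B+(B+A1)) + (2*(mR+1))*(B+A1) - 2*(mR+1))
        - (mR+1)*(2*B) - (L1 + 1/2*(B+A1) + (mR+1)*A1 - (mR+1))) <
      (2*mR+1)/2*(K-B-1) + (B+P) - (L1 + 1/2*(B+A1) + (mR+1)*A1 - (mR+1) - A1) := by
  nlinarith [helem, hU, hL]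

private lemma main_odd (d : ℕ → ℝ)
    (hd : ∀ k : ℕ, d k = ((k : ℝ) / (2 * Real.exp 1)) ^ ((k : ℝ) / 2) *
      (2 * Real.sqrt Real.pi / Real.Gamma (((k : ℝ) + 1) / 2)))
    (m : ℕ) (hm : 1 ≤ m) : d (2*m+2) < d (2*m+1) := by
  have hm0 : (0:ℝ) < (m:ℝ) := by exact_mod_cast hm
  rw [← Real.exp_log (d_pos d hd (2*m+2) (by omega)), ← Real.exp_log (d_pos d hd (2*m+1) (by omega))]
  apply Real.exp_lt_exp.mpr
  rw [log_d d hd (2*m+2) (by omega), log_d d hd (2*m+1) (by omega)]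
  have eG1 : (((2*m+2:ℕ):ℝ)+1)/2 = ((m+1:ℕ):ℝ) + 1/2 := by push_cast; ring
  have eG2 : (((2*m+1:ℕ):ℝ)+1)/2 = ((m:ℕ):ℝ) + 1 := by push_cast; ring
  rw [eG1, eG2, Real.Gamma_nat_eq_factorial, Gamma_half]
  -- abbreviations
  set A1 := Real.log ((m:ℝ)+1) with hA1
  set B := Real.log 2 with hB
  set P := Real.log (Real.sqrt Real.pi) with hP
  set K := Real.log (2*(m:ℝ)+1) with hK
  set L1 := Real.log (Stirling.stirlingSeq (m+1)) with hL1
  set L2 := Real.log (Stirling.stirlingSeq (2*(m+1))) with hL2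
  have sqpi_pos : (0:ℝ) < Real.sqrt Real.pi := Real.sqrt_pos.mpr Real.pi_pos
  have hm1_pos : (0:ℝ) < (m:ℝ)+1 := by linarith
  have hfm_pos : (0:ℝ) < (m ! : ℝ) := by exact_mod_cast Nat.factorial_pos m
  have hfm1_pos : (0:ℝ) < ((m+1)! : ℝ) := by exact_mod_cast Nat.factorial_pos (m+1)
  have hf2m_pos : (0:ℝ) < ((2*(m+1))! : ℝ) := by exact_mod_cast Nat.factorial_pos (2*(m+1))
  have h1 : Real.log (((2*m+2:ℕ):ℝ)/(2*Real.exp 1)) = A1 - 1 := by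
    push_cast
    rw [show 2*(m:ℝ)+2 = 2*((m:ℝ)+1) by ring,
      Real.log_div (by positivity) (by positivity),
      Real.log_mul (by norm_num) (ne_of_gt hm1_pos),
      Real.log_mul (by norm_num) (Real.exp_ne_zero 1), Real.log_exp]
    ring
  have h2 : Real.log (((2*m+1:ℕ):ℝ)/(2*Real.exp 1)) = K - B - 1 := by
    push_cast
    rw [Real.log_div (by positivity) (by positivity),
      Real.log_mul (by norm_num) (Real.exp_ne_zero 1), Real.log_exp]
    ring
  have h3 : Real.log (2*Real.sqrt Real.pi) = B + P := Real.log_mul (by norm_num) (ne_of_gt sqpi_pos)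
  have h4 : Real.log ((4:ℝ)^(m+1)) = ((m:ℝ)+1)*(2*B) := by
    rw [show (4:ℝ) = 2^2 by norm_num, ← pow_mul, Real.log_pow]
    push_cast
    ring
  have h5 : Real.log ((m+1)! : ℝ) = L1 + 1/2*(B + A1) + ((m:ℝ)+1)*A1 - ((m:ℝ)+1) := by
    have := log_factorial (m+1) (by omega)
    rw [this]
    push_cast
    rw [Real.log_mul (by norm_num) (ne_of_gt hm1_pos)]
  have h6 : Real.log (((2*(m+1))! : ℝ)) = L2 + 1/2*(B + (B + A1)) + (2*((m:ℝ)+1))*(B + A1)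
      - 2*((m:ℝ)+1) := by
    have := log_factorial (2*(m+1)) (by omega)
    rw [this]
    push_cast
    rw [Real.log_mul (by norm_num) (by positivity : (2*((m:ℝ)+1)) ≠ 0),
      Real.log_mul (by norm_num) (ne_of_gt hm1_pos)]
  have h7 : Real.log (Real.sqrt Real.pi * ((2*(m+1))! : ℝ)/(4^(m+1) * ((m+1)! : ℝ)))
      = P + (L2 + 1/2*(B + (B + A1)) + (2*((m:ℝ)+1))*(B + A1) - 2*((m:ℝ)+1)) - (((m:ℝ)+1)*(2*B))
        - (L1 + 1/2*(B + A1) + ((m:ℝ)+1)*A1 - ((m:ℝ)+1)) := by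
    rw [Real.log_div (by positivity) (by positivity),
      Real.log_mul (ne_of_gt sqpi_pos) (ne_of_gt hf2m_pos),
      Real.log_mul (by positivity) (ne_of_gt hfm1_pos), h4, h5, h6]
    ring
  have h8 : Real.log (m ! : ℝ) = L1 + 1/2*(B + A1) + ((m:ℝ)+1)*A1 - ((m:ℝ)+1) - A1 := by
    have hfs : ((m+1)! : ℕ) = (m+1) * m ! := Nat.factorial_succ m
    have : Real.log ((m+1)! : ℝ) = A1 + Real.log (m ! : ℝ) := by
      rw [hfs]
      push_cast
      rw [Real.log_mul (ne_of_gt hm1_pos) (ne_of_gt hfm_pos)]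
    linarith [h5, this]
  have helem := elem_odd (show (1:ℝ) ≤ (m:ℝ) by exact_mod_cast hm)
  have hKBA : Real.log (1+1/(2*(m:ℝ)+1)) = (B + A1) - K := by
    rw [show (1:ℝ)+1/(2*(m:ℝ)+1) = (2*((m:ℝ)+1))/(2*(m:ℝ)+1) by field_simp; ring,
      Real.log_div (by positivity) (by positivity),
      Real.log_mul (by norm_num) (ne_of_gt hm1_pos)]
  rw [hKBA, show (2:ℝ)/(12*(m:ℝ)+12) = 2*(1/(12*(m:ℝ)+12)) by rw [mul_one_div]] at helem
  have hrobU : L1 ≤ P + 1/(12*(m:ℝ)+12) := by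
    have := robbins_up' (m+1) (by omega)
    push_cast at this
    rw [hL1, hP]
    convert this using 3
    ring
  have hrobL : P + 1/(24*(m:ℝ)+25) ≤ L2 := by
    have := robbins_lo' (2*(m+1)) (by omega)
    push_cast at this
    rw [hL2, hP]
    convert this using 3
    ring
  rw [h1, h2, h3, h7, h8]
  push_cast
  linarith [odd_linear (m:ℝ) A1 B P K L1 L2 (1/(12*(m:ℝ)+12)) (1/(24*(m:ℝ)+25)) helem hrobU hrobL]

private lemma main_k1 (d : ℕ → ℝ)
    (hd : ∀ k : ℕ, d k = ((k : ℝ) / (2 * Real.exp 1)) ^ ((k : ℝ) / 2) *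
      (2 * Real.sqrt Real.pi / Real.Gamma (((k : ℝ) + 1) / 2))) :
    d 2 < d 1 := by
  have epos := Real.exp_pos 1
  have sqpi_pos : (0:ℝ) < Real.sqrt Real.pi := Real.sqrt_pos.mpr Real.pi_pos
  have hd2 : d 2 = 4 / Real.exp 1 := by
    rw [hd 2]
    push_cast
    rw [show ((2:ℝ)+1)/2 = ((1:ℕ):ℝ)+1/2 by norm_num, Gamma_half 1]
    rw [show ((2:ℝ)/2) = (1:ℝ) by norm_num, Real.rpow_one]
    rw [show ((2*1)! : ℕ) = 2 by decide, show (1! : ℕ) = 1 by decide]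
    push_cast
    field_simp
  have hd1 : d 1 = Real.sqrt (1/(2*Real.exp 1)) * (2*Real.sqrt Real.pi) := by
    rw [hd 1]
    push_cast
    rw [show ((1:ℝ)+1)/2 = (1:ℝ) by norm_num, Real.Gamma_one]
    rw [show ((1:ℝ)/2) = ((1:ℝ)/2) by norm_num, ← Real.sqrt_eq_rpow]
    norm_num
  rw [hd1, hd2]
  have hcomb : Real.sqrt (1/(2*Real.exp 1)) * (2*Real.sqrt Real.pi)
      = 2 * Real.sqrt (1/(2*Real.exp 1) * Real.pi) := by
    rw [Real.sqrt_mul (by positivity)]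
    ring
  rw [hcomb]
  have h8 : (8:ℝ) < Real.pi * Real.exp 1 := by
    nlinarith [Real.pi_gt_d6, Real.exp_one_gt_d9]
  have key : 2/Real.exp 1 < Real.sqrt (1/(2*Real.exp 1) * Real.pi) := by
    rw [Real.lt_sqrt (by positivity)]
    rw [div_pow, show ((2:ℝ)^2) = 4 by norm_num]
    rw [div_lt_iff₀ (by positivity)]
    have e1 : 1/(2*Real.exp 1) * Real.pi * Real.exp 1 ^ 2 = Real.pi * Real.exp 1 / 2 := by
      field_simp
    rw [e1]
    linarith
  calc 4/Real.exp 1 = 2 * (2/Real.exp 1) := by ring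
  _ < 2 * Real.sqrt (1/(2*Real.exp 1) * Real.pi) := by linarith
  _ = 2 * Real.sqrt (1/(2*Real.exp 1) * Real.pi) := rfl

private lemma main_k2 (d : ℕ → ℝ)
    (hd : ∀ k : ℕ, d k = ((k : ℝ) / (2 * Real.exp 1)) ^ ((k : ℝ) / 2) *
      (2 * Real.sqrt Real.pi / Real.Gamma (((k : ℝ) + 1) / 2))) :
    d 3 < d 2 := by
  have epos := Real.exp_pos 1
  have sqpi_pos : (0:ℝ) < Real.sqrt Real.pi := Real.sqrt_pos.mpr Real.pi_pos
  have hd2 : d 2 = 4 / Real.exp 1 := by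
    rw [hd 2]
    push_cast
    rw [show ((2:ℝ)+1)/2 = ((1:ℕ):ℝ)+1/2 by norm_num, Gamma_half 1]
    rw [show ((2:ℝ)/2) = (1:ℝ) by norm_num, Real.rpow_one]
    rw [show ((2*1)! : ℕ) = 2 by decide, show (1! : ℕ) = 1 by decide]
    push_cast
    field_simp
  have hb : (0:ℝ) ≤ 3/(2*Real.exp 1) := by positivity
  have hd3 : d 3 = Real.sqrt ((3/(2*Real.exp 1))^3) * (2*Real.sqrt Real.pi) := by
    rw [hd 3]
    push_cast
    rw [show ((3:ℝ)+1)/2 = ((1:ℕ):ℝ)+1 by norm_num, Real.Gamma_nat_eq_factorial]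
    rw [show ((3:ℝ)/2) = ((3:ℕ):ℝ)*(1/2) by norm_num, Real.rpow_mul hb, Real.rpow_natCast,
      ← Real.sqrt_eq_rpow]
    norm_num
  rw [hd2, hd3]
  have hcomb : Real.sqrt ((3/(2*Real.exp 1))^3) * (2*Real.sqrt Real.pi)
      = 2 * Real.sqrt ((3/(2*Real.exp 1))^3 * Real.pi) := by
    rw [Real.sqrt_mul (by positivity)]
    ring
  rw [hcomb]
  have h27 : 27*Real.pi < 32*Real.exp 1 := by
    nlinarith [Real.pi_lt_d6, Real.exp_one_gt_d9]
  have key : Real.sqrt ((3/(2*Real.exp 1))^3 * Real.pi) < 2/Real.exp 1 := by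
    rw [Real.sqrt_lt' (by positivity)]
    rw [div_pow, div_pow, show ((2:ℝ)^2) = 4 by norm_num, show ((3:ℝ)^3) = 27 by norm_num]
    rw [div_mul_eq_mul_div, div_lt_div_iff₀ (by positivity) (by positivity)]
    have e1 : (2*Real.exp 1)^3 = 8 * Real.exp 1^3 := by ring
    nlinarith [mul_lt_mul_of_pos_right h27 (pow_pos epos 2), pow_pos epos 3, pow_pos epos 2]
  calc 2 * Real.sqrt ((3/(2*Real.exp 1))^3 * Real.pi) < 2 * (2/Real.exp 1) := by linarith
  _ = 4/Real.exp 1 := by ring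


/-- The Gaussian densities `d_k = (k/(2e))^{k/2} · 2√π / Γ((k+1)/2)` of the shrinking
sphere-cylinders are strictly decreasing in the sphere dimension: `d_{k+1} < d_k`
for every `k ≥ 1`. -/
theorem gaussian_densities_strictly_decreasing (d : ℕ → ℝ)
    (hd : ∀ k : ℕ, d k = ((k : ℝ) / (2 * Real.exp 1)) ^ ((k : ℝ) / 2) *
      (2 * Real.sqrt Real.pi / Real.Gamma (((k : ℝ) + 1) / 2)))
    (k : ℕ) (hk : 1 ≤ k) :
    d (k + 1) < d k := by
  rcases Nat.even_or_odd k with ⟨m, hm⟩ | ⟨m, hm⟩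
  · subst hm
    obtain _|_|m := m
    · exact absurd hk (by omega)
    · exact main_k2 d hd
    · rw [show (m+2)+(m+2) = 2*(m+2) by ring]
      exact main_even d hd (m+2) (by omega)
  · subst hm
    obtain _|m := m
    · exact main_k1 d hd
    · exact main_odd d hd (m+1) (by omega)
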